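/- Suppose r_1 \ge r_2 \ge ... \ge r_n is an arithmetical structure on K_n with r_1 = p a prime, p \ge 3. Let S = r_1 + ... + r_n, b = S / p, and let m be the number of indices i with r_i = p. Then b > m. -/

import Mathlib

/-- An arithmetical structure on `K n`. -/
def IsArithStruct (n : ℕ) (r : Fin n → ℕ) : Prop :=
  (∀ i, 0 < r i) ∧ Finset.univ.gcd r = 1 ∧ ∀ j, r j ∣ ∑ i, r i

theorem stmt_13 (n p : ℕ) (hn : 0 < n) (r : Fin n → ℕ)
    (h : IsArithStruct n r) (hanti : Antitone r)
    (hp : Nat.Prime p) (hp3 : 3 ≤ p) (hr1 : r ⟨0, hn⟩ = p) :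
    (Finset.univ.filter (fun i => r i = p)).card < (∑ i, r i) / p := by
  obtain ⟨hpos, hgcd, hdvd⟩ := h
  have hpS : p ∣ ∑ i, r i := hr1 ▸ hdvd ⟨0, hn⟩
  rw [Nat.lt_div_iff_mul_lt' hpS]
  -- not all entries are p
  have hne : ∃ i, r i ≠ p := by
    by_contra hc
    push_neg at hc
    have hdvd1 : p ∣ Finset.univ.gcd r :=
      Finset.dvd_gcd fun i _ => (hc i) ▸ dvd_refl _
    rw [hgcd] at hdvd1
    have := Nat.le_of_dvd one_pos hdvd1
    omega
  obtain ⟨j, hj⟩ := hne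
  classical
  have hsplit : ∑ i, r i =
      ∑ i ∈ Finset.univ.filter (fun i => r i = p), r i +
      ∑ i ∈ Finset.univ.filter (fun i => ¬ r i = p), r i :=
    (Finset.sum_filter_add_sum_filter_not _ _ _).symm
  have h1 : ∑ i ∈ Finset.univ.filter (fun i => r i = p), r i =
      p * (Finset.univ.filter (fun i => r i = p)).card := by
    rw [Finset.sum_congr rfl (fun i hi => (Finset.mem_filter.mp hi).2),
      Finset.sum_const, smul_eq_mul, Nat.mul_comm]
  have h2 : 0 < ∑ i ∈ Finset.univ.filter (fun i => ¬ r i = p), r i :=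
    Finset.sum_pos (fun i _ => hpos i) ⟨j, Finset.mem_filter.mpr ⟨Finset.mem_univ j, hj⟩⟩
  omega
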